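/- arXiv:0902.1312 — 3 statements merged into one kernel-verified Lean document; each statement's English description precedes it below -/
import Mathlib

section
/- Let G be a non-trivial Frobenius group with kernel K and complement H, and let θ be a generalized character of G that does not vanish identically on H^#. Then Σ_{g∈G^#}|θ(g)|² ≥ |K|. -/
open scoped BigOperators Classical
open Module CategoryTheory.MonoidalCategory

noncomputable section

/-- Conjugate representation: conjugate of a character is a character. -/
lemma exists_conj_char {H : Type} [Group H] (A : FDRep ℂ H) :
    ∃ B : FDRep ℂ H, ∀ h, B.character h = starRingEnd ℂ (A.character h) := by
  set n := finrank ℂ A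
  set b : Basis (Fin n) ℂ A := finBasis ℂ A
  set e1 : (A →ₗ[ℂ] A) ≃ₐ[ℂ] Matrix (Fin n) (Fin n) ℂ := LinearMap.toMatrixAlgEquiv b
  set cmap : Matrix (Fin n) (Fin n) ℂ →+* Matrix (Fin n) (Fin n) ℂ :=
    (starRingEnd ℂ).mapMatrix
  set e2 : Matrix (Fin n) (Fin n) ℂ ≃ₐ[ℂ] ((Fin n → ℂ) →ₗ[ℂ] (Fin n → ℂ)) :=
    Matrix.toLinAlgEquiv (Pi.basisFun ℂ (Fin n))
  set f : (A →ₗ[ℂ] A) →* ((Fin n → ℂ) →ₗ[ℂ] (Fin n → ℂ)) :=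
    (e2.toRingEquiv.toRingHom.comp (cmap.comp e1.toRingEquiv.toRingHom)).toMonoidHom
  set ρ' : Representation ℂ H (Fin n → ℂ) := f.comp A.ρ
  refine ⟨FDRep.of ρ', fun h => ?_⟩
  have h1 : (FDRep.of ρ').character h = LinearMap.trace ℂ (Fin n → ℂ) (ρ' h) := rfl
  rw [h1]
  have h2 : ρ' h = Matrix.toLin (Pi.basisFun ℂ (Fin n)) (Pi.basisFun ℂ (Fin n))
      (((LinearMap.toMatrix b b (A.ρ h)).map (starRingEnd ℂ))) := rfl
  rw [h2, LinearMap.trace_eq_matrix_trace ℂ (Pi.basisFun ℂ (Fin n)), LinearMap.toMatrix_toLin]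
  have h3 : A.character h = Matrix.trace (LinearMap.toMatrix b b (A.ρ h)) :=
    LinearMap.trace_eq_matrix_trace ℂ b (A.ρ h)
  rw [h3, Matrix.trace, Matrix.trace, map_sum]
  simp [Matrix.diag]

end

lemma exists_res {G : Type} [Group G] (H : Subgroup G) (V : FDRep ℂ G) :
    ∃ A : FDRep ℂ ↥H, ∀ h : ↥H, A.character h = V.character ↑h :=
  ⟨FDRep.of (V.ρ.comp H.subtype), fun _ => rfl⟩

lemma sum_char_mul_char {H : Type} [Group H] [Fintype H] (A B : FDRep ℂ H) :
    ∃ m : ℕ, ∑ h : H, A.character h * B.character h = (Fintype.card H : ℂ) * m := by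
  haveI : Invertible (Fintype.card H : ℂ) :=
    invertibleOfNonzero (by exact_mod_cast Fintype.card_ne_zero)
  refine ⟨finrank ℂ (Representation.invariants (A ⊗ B).ρ), ?_⟩
  have h1 := FDRep.average_char_eq_finrank_invariants (A ⊗ B)
  rw [FDRep.char_tensor] at h1
  have h2 : ((Fintype.card H : ℂ)) * (⅟ (Fintype.card H : ℂ) •
      ∑ g : H, (A.character * B.character) g) = (Fintype.card H : ℂ) *
      (finrank ℂ (Representation.invariants (A ⊗ B).ρ) : ℂ) := by
    rw [← h1, smul_eq_mul, invOf_eq_inv, Nat.card_eq_fintype_card]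
  rw [smul_eq_mul, ← mul_assoc, mul_invOf_self, one_mul] at h2
  simpa [Pi.mul_apply] using h2

lemma virtual_sum_normSq {H : Type} [Group H] [Fintype H] (n : ℕ)
    (φ : Fin n → FDRep ℂ H) (a : Fin n → ℤ) (θ : H → ℂ)
    (hrep : ∀ h, θ h = ∑ i, (a i : ℂ) * (φ i).character h) :
    ∃ m : ℤ, ∑ h : H, θ h * (starRingEnd ℂ) (θ h) = (Fintype.card H : ℂ) * m := by
  choose ψ hψ using fun i => exists_conj_char (φ i)
  choose c hc using fun i j => sum_char_mul_char (φ i) (ψ j)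
  refine ⟨∑ i, ∑ j, a i * a j * c i j, ?_⟩
  have e1 : ∀ h, θ h * (starRingEnd ℂ) (θ h) =
      ∑ i, ∑ j, ((a i : ℂ) * (a j : ℂ)) * ((φ i).character h * (ψ j).character h) := by
    intro h
    have econj : (starRingEnd ℂ) (θ h) = ∑ j, (a j : ℂ) * (ψ j).character h := by
      rw [hrep h, map_sum]
      refine Finset.sum_congr rfl fun j _ => ?_
      rw [map_mul, map_intCast, hψ]
    rw [econj, hrep h, Finset.sum_mul_sum]
    refine Finset.sum_congr rfl fun i _ => Finset.sum_congr rfl fun j _ => ?_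
    ring
  rw [Finset.sum_congr rfl fun h _ => e1 h]
  rw [Finset.sum_comm]
  have e2 : ∀ i, ∑ h : H, ∑ j, ((a i : ℂ) * (a j : ℂ)) * ((φ i).character h * (ψ j).character h)
      = ∑ j, ((a i : ℂ) * (a j : ℂ)) * ((Fintype.card H : ℂ) * (c i j : ℂ)) := by
    intro i
    rw [Finset.sum_comm]
    refine Finset.sum_congr rfl fun j _ => ?_
    rw [← Finset.mul_sum, hc]
  rw [Finset.sum_congr rfl fun i _ => e2 i]
  push_cast
  rw [Finset.mul_sum]
  refine Finset.sum_congr rfl fun i _ => ?_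
  rw [Finset.mul_sum]
  refine Finset.sum_congr rfl fun j _ => ?_
  ring

/-- `χ` is the character of some irreducible complex representation of `G`. -/
def IsIrrChar (G : Type) [Group G] [Fintype G] (χ : G → ℂ) : Prop :=
  ∃ V : FDRep ℂ G, CategoryTheory.Simple V ∧ ∀ g, χ g = V.character g

/-- `θ` is a generalized (virtual) character: a `ℤ`-linear combination of irreducible characters. -/
def IsVirtualChar (G : Type) [Group G] [Fintype G] (θ : G → ℂ) : Prop :=
  ∃ (n : ℕ) (χ : Fin n → G → ℂ) (a : Fin n → ℤ),
    (∀ i, IsIrrChar G (χ i)) ∧ ∀ g, θ g = ∑ i, (a i : ℂ) * χ i g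

/-- The regular character of `G`. -/
noncomputable def regChar (G : Type) [Group G] [Fintype G] : G → ℂ :=
  fun g => if g = 1 then (Fintype.card G : ℂ) else 0

/-- `G` is a Frobenius group with kernel `K` and complement `H`. -/
def IsFrobeniusWith {G : Type} [Group G] (K H : Subgroup G) : Prop :=
  K.Normal ∧ K ≠ ⊥ ∧ H ≠ ⊥ ∧ K.IsComplement' H ∧
    ∀ h ∈ H, h ≠ 1 → ∀ k ∈ K, h * k * h⁻¹ = k → k = 1

/-- In a Frobenius group with kernel `K` and complement `H`, any generalized character not
vanishing identically on `H^#` satisfies `Σ_{g≠1}|θ(g)|² ≥ |K|`. -/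
theorem stmt3 (G : Type) [Group G] [Fintype G] (K H : Subgroup G)
    (hF : IsFrobeniusWith K H) (θ : G → ℂ) (hθ : IsVirtualChar G θ)
    (hne : ∃ h ∈ H, h ≠ 1 ∧ θ h ≠ 0) :
    (Nat.card K : ℝ) ≤ ∑ g ∈ Finset.univ.filter (· ≠ (1 : G)), Complex.normSq (θ g) := by
  classical
  obtain ⟨hN, hKbot, hHbot, hcompl, hfr⟩ := hF
  obtain ⟨n, χ, a, hirr, hsum⟩ := hθ
  choose V hVs hVchar using hirr
  have hrepG : ∀ g, θ g = ∑ i, (a i : ℂ) * (V i).character g := by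
    intro g; rw [hsum g]
    exact Finset.sum_congr rfl fun i _ => by rw [hVchar i g]
  have hclass : ∀ (x g : G), θ (x * g * x⁻¹) = θ g := by
    intro x g; rw [hrepG, hrepG]
    exact Finset.sum_congr rfl fun i _ => by rw [FDRep.char_conj]
  -- restriction to H
  choose A hA using fun i => exists_res H (V i)
  have hrepH : ∀ h : ↥H, θ ↑h = ∑ i, (a i : ℂ) * (A i).character h := by
    intro h; rw [hrepG]
    exact Finset.sum_congr rfl fun i _ => by rw [hA i h]
  obtain ⟨m, hm⟩ := virtual_sum_normSq n A a (fun h : ↥H => θ ↑h) hrepH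
  have hd : θ 1 = ((∑ i, a i * (finrank ℂ (V i)) : ℤ) : ℂ) := by
    rw [hrepG]; push_cast
    exact Finset.sum_congr rfl fun i _ => by rw [FDRep.char_one]
  set d : ℤ := ∑ i, a i * (finrank ℂ (V i)) with hd_def
  set HS : Finset ↥H := Finset.univ.erase 1 with hHS
  set S : ℝ := ∑ h ∈ HS, Complex.normSq (θ ↑h) with hS
  have hsplit : ∑ h : ↥H, Complex.normSq (θ ↑h) = S + Complex.normSq (θ 1) := by
    rw [← Finset.sum_erase_add Finset.univ _ (Finset.mem_univ (1 : ↥H))]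
    norm_num [hS, hHS]
  have hm' : ((∑ h : ↥H, Complex.normSq (θ ↑h) : ℝ) : ℂ) = (Fintype.card ↥H : ℂ) * m := by
    rw [← hm]; push_cast
    exact Finset.sum_congr rfl fun h _ => (Complex.mul_conj (θ ↑h)).symm
  have hreal : ∑ h : ↥H, Complex.normSq (θ ↑h) = (Fintype.card ↥H : ℝ) * (m : ℝ) := by
    exact_mod_cast hm'
  have hnsq1 : Complex.normSq (θ 1) = ((d * d : ℤ) : ℝ) := by
    rw [hd, show ((d : ℂ)) = (((d : ℝ) : ℂ)) by norm_cast, Complex.normSq_ofReal]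
    push_cast; ring
  have hS_int : S = ((Fintype.card ↥H * m - d * d : ℤ) : ℝ) := by
    have := hsplit
    rw [hreal, hnsq1] at this
    push_cast at this ⊢
    linarith
  obtain ⟨h₀, h₀H, h₀ne, h₀θ⟩ := hne
  have hS_pos : 0 < S := by
    refine Finset.sum_pos' (fun h _ => Complex.normSq_nonneg _) ⟨⟨h₀, h₀H⟩, ?_, ?_⟩
    · rw [hHS]; exact Finset.mem_erase.2 ⟨fun e => h₀ne (by simpa using congrArg (Subtype.val) e), Finset.mem_univ _⟩
    · exact Complex.normSq_pos.2 h₀θ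
  have hS1 : (1 : ℝ) ≤ S := by
    have hz : (0 : ℤ) < Fintype.card ↥H * m - d * d := by
      rw [hS_int] at hS_pos; exact_mod_cast hS_pos
    rw [hS_int]; exact_mod_cast hz
  -- conjugation combinatorics
  have key : ∀ k : ↥K, ∀ h : G, h ∈ H → h ≠ 1 → ((k : G) * h * (k : G)⁻¹ ∈ H) → (k : G) = 1 := by
    intro k h hH hne1 hconj
    have hKH : Disjoint K H := hcompl.disjoint
    have hmem : ((k : G) * h * (k : G)⁻¹) * h⁻¹ ∈ K := by
      have : (k : G) * (h * (k : G)⁻¹ * h⁻¹) ∈ K :=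
        K.mul_mem k.2 (hN.conj_mem _ (K.inv_mem k.2) h)
      simpa [mul_assoc] using this
    have hmem2 : ((k : G) * h * (k : G)⁻¹) * h⁻¹ ∈ H := H.mul_mem hconj (H.inv_mem hH)
    have heq : (k : G) * h * (k : G)⁻¹ = h := by
      have := Subgroup.disjoint_def.1 hKH hmem hmem2
      have := mul_inv_eq_one.1 this
      exact this
    have hcomm' : (k : G) * h = h * (k : G) := by
      have := congrArg (· * (k : G)) heq
      simpa [mul_assoc] using this
    have hcomm : h * (k : G) * h⁻¹ = (k : G) := by
      rw [← hcomm']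
      simp [mul_assoc]
    exact hfr h hH hne1 (k : G) k.2 hcomm
  set T : ↥K → Finset G := fun k => HS.image (fun h : ↥H => (k : G) * ↑h * (k : G)⁻¹) with hT
  have hinj : ∀ k : ↥K, Set.InjOn (fun h : ↥H => (k : G) * ↑h * (k : G)⁻¹) HS := by
    intro k h₁ _ h₂ _ e
    simp only at e
    exact Subtype.ext (mul_left_cancel (mul_right_cancel e))
  have hTsum : ∀ k : ↥K, ∑ g ∈ T k, Complex.normSq (θ g) = S := by
    intro k
    rw [hT]
    rw [Finset.sum_image (fun h₁ m₁ h₂ m₂ => hinj k m₁ m₂)]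
    exact Finset.sum_congr rfl fun h _ => by rw [hclass]
  have hTsub : ∀ k ∈ (Finset.univ : Finset ↥K), T k ⊆ Finset.univ.filter (· ≠ (1 : G)) := by
    intro k _ g hg
    rw [hT] at hg
    obtain ⟨h, hhm, rfl⟩ := Finset.mem_image.1 hg
    refine Finset.mem_filter.2 ⟨Finset.mem_univ _, ?_⟩
    intro e
    have e1 : (k : G) * (h : G) = (k : G) := by
      have := congrArg (· * (k : G)) e
      simpa [mul_assoc] using this
    have e2 : (h : G) = 1 := mul_left_cancel (a := (k : G)) (by rw [mul_one]; exact e1)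
    have : h = (1 : ↥H) := Subtype.ext (by simpa using e2)
    exact (Finset.mem_erase.1 hhm).1 this
  have hTdisj : ∀ k₁ ∈ (Finset.univ : Finset ↥K), ∀ k₂ ∈ (Finset.univ : Finset ↥K),
      k₁ ≠ k₂ → Disjoint (T k₁) (T k₂) := by
    intro k₁ _ k₂ _ hne12
    rw [Finset.disjoint_left]
    intro g hg1 hg2
    rw [hT] at hg1 hg2
    obtain ⟨h₁, hm1, he1⟩ := Finset.mem_image.1 hg1
    obtain ⟨h₂, hm2, he2⟩ := Finset.mem_image.1 hg2
    apply hne12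
    have hkk : ((k₂⁻¹ * k₁ : ↥K) : G) * ↑h₁ * ((k₂⁻¹ * k₁ : ↥K) : G)⁻¹ = (h₂ : G) := by
      push_cast
      rw [← he2] at he1
      have h3 := congrArg (fun x => (k₂ : G)⁻¹ * x * (k₂ : G)) he1
      simp only [mul_inv_rev, inv_inv, mul_assoc] at h3 ⊢
      simpa [mul_assoc] using h3
    have h1ne : (h₁ : G) ≠ 1 := by
      intro e
      exact (Finset.mem_erase.1 hm1).1 (Subtype.ext (by simpa using e))
    have := key (k₂⁻¹ * k₁) ↑h₁ h₁.2 h1ne (by rw [hkk]; exact h₂.2)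
    have : (k₂⁻¹ * k₁ : ↥K) = 1 := Subtype.ext (by simpa using this)
    have := eq_of_inv_mul_eq_one (a := k₂) (b := k₁) (by simpa using this)
    exact this.symm
  calc (Nat.card K : ℝ) = (Fintype.card ↥K : ℝ) * 1 := by
        rw [Nat.card_eq_fintype_card]; ring
    _ ≤ (Fintype.card ↥K : ℝ) * S := by
        exact mul_le_mul_of_nonneg_left hS1 (by positivity)
    _ = ∑ _k : ↥K, S := by rw [Finset.sum_const, Finset.card_univ, nsmul_eq_mul]
    _ = ∑ k : ↥K, ∑ g ∈ T k, Complex.normSq (θ g) :=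
        (Finset.sum_congr rfl fun k _ => (hTsum k).symm)
    _ = ∑ g ∈ Finset.univ.biUnion T, Complex.normSq (θ g) :=
        (Finset.sum_biUnion hTdisj).symm
    _ ≤ ∑ g ∈ Finset.univ.filter (· ≠ (1 : G)), Complex.normSq (θ g) := by
        refine Finset.sum_le_sum_of_subset_of_nonneg ?_ (fun _ _ _ => Complex.normSq_nonneg _)
        exact Finset.biUnion_subset.2 hTsub
end

section
/- If H is a subgroup of a finite group G with |H| ≥ √|G|, then every irreducible character of G is non-vanishing somewhere on H^#; that is, k₊(G,H) = k(G). -/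
open scoped BigOperators Classical

section Aux
open Module Polynomial LinearMap

lemma trace_inv_eq_conj {V : Type*} [AddCommGroup V] [Module ℂ V] [FiniteDimensional ℂ V]
    (f g : Module.End ℂ V) (n : ℕ) (hn : n ≠ 0) (hfn : f ^ n = 1) (hfg : f * g = 1) :
    LinearMap.trace ℂ V g = starRingEnd ℂ (LinearMap.trace ℂ V f) := by
  have hgf : g * f = 1 := mul_eq_one_comm.mp hfg
  have haev : Polynomial.aeval f (X ^ n - 1 : ℂ[X]) = 0 := by
    simp [map_pow, hfn]
  have hmin : minpoly ℂ f ∣ (X ^ n - 1 : ℂ[X]) := minpoly.dvd _ _ haev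
  have heig : ∀ μ : ℂ, f.eigenspace μ ≠ ⊥ → μ ^ n = 1 := by
    intro μ hμ
    have h1 : (minpoly ℂ f).IsRoot μ :=
      Module.End.isRoot_of_hasEigenvalue hμ
    have h2 : (X ^ n - 1 : ℂ[X]).IsRoot μ := h1.dvd hmin
    have := h2
    simp only [IsRoot, eval_sub, eval_pow, eval_X, eval_one, sub_eq_zero] at this
    exact this
  have hsep : (X ^ n - 1 : ℂ[X]).Separable :=
    X_pow_sub_one_separable_iff.mpr (by exact_mod_cast hn)
  have hss : f.IsSemisimple :=
    Module.End.isSemisimple_of_squarefree_aeval_eq_zero hsep.squarefree haev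
  have htop : ⨆ μ : ℂ, f.eigenspace μ = ⊤ := by
    have h := Module.End.iSup_maxGenEigenspace_eq_top f
    simp_rw [hss.isFinitelySemisimple.maxGenEigenspace_eq_eigenspace] at h
    exact h
  have hind := f.eigenspaces_iSupIndep
  have hint : DirectSum.IsInternal f.eigenspace :=
    DirectSum.isInternal_submodule_of_iSupIndep_of_iSup_eq_top hind htop
  have hfin : {μ : ℂ | f.eigenspace μ ≠ ⊥}.Finite :=
    WellFoundedGT.finite_ne_bot_of_iSupIndep hind
  have hmf : ∀ μ : ℂ, Set.MapsTo f (f.eigenspace μ) (f.eigenspace μ) := by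
    intro μ x hx
    have h := Module.End.mem_eigenspace_iff.mp hx
    rw [SetLike.mem_coe, Module.End.mem_eigenspace_iff, h, map_smul, h]
  have hmg : ∀ μ : ℂ, Set.MapsTo g (f.eigenspace μ) (f.eigenspace μ) := by
    intro μ x hx
    have h := Module.End.mem_eigenspace_iff.mp hx
    have hx2 : μ • g x = x := by
      have : g (f x) = x := by
        have := LinearMap.congr_fun hgf x; simpa using this
      rw [h, map_smul] at this; exact this
    rw [SetLike.mem_coe, Module.End.mem_eigenspace_iff]
    have hfgx : f (g x) = x := by
      have := LinearMap.congr_fun hfg x; simpa using this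
    rw [hfgx]; exact hx2.symm
  have htrf : LinearMap.trace ℂ V f
      = ∑ μ ∈ hfin.toFinset, μ * (finrank ℂ (f.eigenspace μ) : ℂ) := by
    rw [trace_eq_sum_trace_restrict' hint hfin hmf]
    refine Finset.sum_congr rfl fun μ _ => ?_
    have hres : f.restrict (hmf μ) = μ • (1 : Module.End ℂ (f.eigenspace μ)) := by
      ext x
      have := Module.End.mem_eigenspace_iff.mp x.2
      simp [LinearMap.restrict_apply, LinearMap.restrict_coe_apply, this]; exact this
    rw [hres, map_smul, trace_one, smul_eq_mul]
  have htrg : LinearMap.trace ℂ V g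
      = ∑ μ ∈ hfin.toFinset, (starRingEnd ℂ μ) * (finrank ℂ (f.eigenspace μ) : ℂ) := by
    rw [trace_eq_sum_trace_restrict' hint hfin hmg]
    refine Finset.sum_congr rfl fun μ hμ => ?_
    have hμn : μ ^ n = 1 := heig μ (by simpa using hfin.mem_toFinset.mp hμ)
    have hμ0 : μ ≠ 0 := by
      intro h; rw [h] at hμn; simp [zero_pow hn] at hμn
    have hcon : starRingEnd ℂ μ = μ⁻¹ :=
      (Complex.inv_eq_conj (Complex.norm_eq_one_of_pow_eq_one hμn hn)).symm
    have hres : g.restrict (hmg μ) = μ⁻¹ • (1 : Module.End ℂ (f.eigenspace μ)) := by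
      ext x
      have h := Module.End.mem_eigenspace_iff.mp x.2
      have hx2 : μ • g (x : V) = (x : V) := by
        have : g (f (x : V)) = x := by
          have := LinearMap.congr_fun hgf (x : V); simpa using this
        rw [h, map_smul] at this; exact this
      have hgx : g (x : V) = μ⁻¹ • (x : V) := by
        conv_rhs => rw [← hx2]
        rw [smul_smul, inv_mul_cancel₀ hμ0, one_smul]
      simp [LinearMap.restrict_apply, LinearMap.restrict_coe_apply, hgx]; exact hgx
    rw [hres, map_smul, trace_one, smul_eq_mul, hcon]
  rw [htrf, htrg, map_sum]
  refine Finset.sum_congr rfl fun μ _ => ?_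
  simp

end Aux

open Module Polynomial LinearMap in
/-- If `|H| ≥ √|G|`, every irreducible character of `G` is non-vanishing somewhere on `H^#`. -/
theorem stmt11 (G : Type) [Group G] [Fintype G] (H : Subgroup G) (hH : H ≠ ⊥)
    (hcard : Fintype.card G ≤ Fintype.card H * Fintype.card H) :
    ∀ χ : G → ℂ, IsIrrChar G χ → ∃ h ∈ H, h ≠ 1 ∧ χ h ≠ 0 := by
  intro χ hχ
  obtain ⟨V, hs, hχV⟩ := hχ
  by_contra hcon
  push_neg at hcon
  have hvan : ∀ g : G, g ∈ H → g ≠ 1 → V.character g = 0 := by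
    intro g hg h1
    rw [← hχV g]; exact hcon g hg h1
  haveI := hs
  haveI : Invertible ((Fintype.card G : ℂ)) :=
    invertibleOfNonzero (by exact_mod_cast Fintype.card_pos.ne')
  haveI : Invertible ((Fintype.card ↥H : ℂ)) :=
    invertibleOfNonzero (by exact_mod_cast Fintype.card_pos.ne')
  set d : ℕ := finrank ℂ V with hd
  letI : Fintype ↑(G) := (inferInstance : Fintype G)
  haveI : Invertible ((Fintype.card ↑(G) : ℂ)) :=
    invertibleOfNonzero (by
      have : (0:ℕ) < Fintype.card ↑(G) := Fintype.card_pos_iff.mpr ⟨(1:G)⟩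
      exact_mod_cast this.ne')
  -- orthonormality
  have horth := FDRep.char_orthonormal (k := ℂ) (G := G) V V
  rw [if_pos ⟨CategoryTheory.Iso.refl V⟩] at horth
  rw [Nat.card_eq_fintype_card, ← invOf_eq_inv] at horth
  have hsum : ∑ g : G, V.character g * V.character g⁻¹ = (Fintype.card G : ℂ) := by
    have h2 := congrArg (fun z => (Fintype.card G : ℂ) * z) horth
    have h3 : (∑ g : G, V.character g * V.character g⁻¹) =
        ∑ g : ↑(G), V.character g * V.character g⁻¹ := rfl
    have h4 : (Fintype.card G : ℂ) = (Fintype.card ↑(G) : ℂ) := rfl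
    rw [h3, h4]
    simp only [smul_eq_mul, ← mul_assoc] at h2
    rw [mul_invOf_self, one_mul, mul_one] at h2
    exact h2
  -- restriction to H
  set W : FDRep ℂ ↥H := FDRep.of (V.ρ.comp H.subtype) with hW
  have hWchar : ∀ h : ↥H, W.character h = V.character (↑h : G) := fun h => rfl
  have havH := FDRep.average_char_eq_finrank_invariants W
  rw [Nat.card_eq_fintype_card, ← invOf_eq_inv] at havH
  set m : ℕ := finrank ℂ (Representation.invariants W.ρ) with hm
  have hsumH : ∑ h : ↥H, W.character h = (d : ℂ) := by
    rw [Finset.sum_eq_single (1 : ↥H)]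
    · rw [hWchar]; simp only [OneMemClass.coe_one, FDRep.char_one]; rfl
    · intro h _ hne
      rw [hWchar]
      exact hvan ↑h h.2 (by simpa [← Subtype.ext_iff] using hne)
    · intro habs; exact absurd (Finset.mem_univ _) habs
  have hdm : d = Fintype.card ↥H * m := by
    have : (d : ℂ) = (Fintype.card ↥H : ℂ) * m := by
      rw [← hsumH]
      have h2 := congrArg (fun z => (Fintype.card ↥H : ℂ) * z) havH
      simp only [smul_eq_mul, ← mul_assoc, mul_invOf_self, one_mul] at h2
      exact h2
    exact_mod_cast this
  -- d ≠ 0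
  have hd0 : d ≠ 0 := by
    intro h0
    haveI : Subsingleton V := by
      rw [← Module.finrank_zero_iff (R := ℂ) (M := V)]; exact h0
    have hz : ∀ g : G, V.character g = 0 := by
      intro g
      have : V.ρ g = 0 := Subsingleton.elim _ _
      simp [FDRep.character, this]
    rw [Finset.sum_congr rfl (fun g _ => by rw [hz g, zero_mul])] at hsum
    simp only [Finset.sum_const_zero] at hsum
    exact (Nat.cast_ne_zero.mpr Fintype.card_pos.ne').symm hsum
  -- conjugation
  have hconj : ∀ g : G, V.character g⁻¹ = starRingEnd ℂ (V.character g) := by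
    intro g
    refine trace_inv_eq_conj (V.ρ g) (V.ρ g⁻¹) (Fintype.card G) Fintype.card_pos.ne' ?_ ?_
    · rw [← map_pow, pow_card_eq_one, map_one]
    · rw [← map_mul, mul_inv_cancel, map_one]
  have hreal : ∑ g : G, Complex.normSq (V.character g) = (Fintype.card G : ℝ) := by
    have h1 : ∑ g : G, V.character g * V.character g⁻¹
        = ∑ g : G, (Complex.normSq (V.character g) : ℂ) := by
      refine Finset.sum_congr rfl fun g _ => ?_
      rw [hconj g, Complex.mul_conj]
    rw [h1] at hsum
    exact_mod_cast hsum
  -- split the normSq sum over H and its complement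
  have hSH : ∑ g ∈ Finset.univ.filter (fun g : G => g ∈ H), Complex.normSq (V.character g)
      = (d : ℝ) * d := by
    rw [Finset.sum_eq_single_of_mem (1 : G) (by simp [H.one_mem])]
    · rw [FDRep.char_one]
      exact_mod_cast Complex.normSq_natCast d
    · intro g hg hne
      rw [hvan g (Finset.mem_filter.mp hg).2 hne, map_zero]
  have hsplit := Finset.sum_filter_add_sum_filter_not Finset.univ (fun g : G => g ∈ H)
    (fun g => Complex.normSq (V.character g))
  rw [hreal, hSH] at hsplit
  have hTnn : (0:ℝ) ≤ ∑ g ∈ Finset.univ.filter (fun g : G => ¬ g ∈ H),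
      Complex.normSq (V.character g) :=
    Finset.sum_nonneg fun g _ => Complex.normSq_nonneg _
  -- d ≥ |H|
  have hm1 : 1 ≤ m := by
    rcases Nat.eq_zero_or_pos m with h | h
    · exact absurd (by rw [hdm, h, mul_zero]) hd0
    · exact h
  have hHd : Fintype.card ↥H ≤ d := by
    calc Fintype.card ↥H = Fintype.card ↥H * 1 := (mul_one _).symm
    _ ≤ Fintype.card ↥H * m := Nat.mul_le_mul_left _ hm1
    _ = d := hdm.symm
  have hdown : (Fintype.card G : ℝ) ≤ (d : ℝ) * d := by
    have h1 : Fintype.card G ≤ d * d :=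
      le_trans hcard (Nat.mul_le_mul hHd hHd)
    exact_mod_cast h1
  -- equality, so characters vanish off H
  have hT0 : ∑ g ∈ Finset.univ.filter (fun g : G => ¬ g ∈ H),
      Complex.normSq (V.character g) = 0 := by linarith
  have hzero : ∀ g : G, g ∉ H → V.character g = 0 := by
    intro g hg
    have := (Finset.sum_eq_zero_iff_of_nonneg
      (fun g _ => Complex.normSq_nonneg (V.character g))).mp hT0 g (by simp [hg])
    exact Complex.normSq_eq_zero.mp this
  have hall : ∀ g : G, g ≠ 1 → V.character g = 0 := fun g hg =>
    if hgH : g ∈ H then hvan g hgH hg else hzero g hgH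
  -- invariants over all of G
  have havG := FDRep.average_char_eq_finrank_invariants V
  rw [Nat.card_eq_fintype_card, ← invOf_eq_inv] at havG
  set M : ℕ := finrank ℂ (Representation.invariants V.ρ) with hM
  have hsumG : ∑ g : G, V.character g = (d : ℂ) := by
    rw [Finset.sum_eq_single (1 : G)]
    · simp; rfl
    · intro g _ hne; exact hall g hne
    · intro habs; exact absurd (Finset.mem_univ _) habs
  have hdM : d = Fintype.card G * M := by
    have h2 := congrArg (fun z => (Fintype.card G : ℂ) * z) havG
    simp only [smul_eq_mul, ← mul_assoc, mul_invOf_self, one_mul] at h2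
    rw [hsumG] at h2
    exact_mod_cast h2
  have hM1 : 1 ≤ M := by
    rcases Nat.eq_zero_or_pos M with h | h
    · exact absurd (by rw [hdM, h, mul_zero]) hd0
    · exact h
  have hGd : Fintype.card G ≤ d := by
    calc Fintype.card G = Fintype.card G * 1 := (mul_one _).symm
    _ ≤ Fintype.card G * M := Nat.mul_le_mul_left _ hM1
    _ = d := hdM.symm
  have hd2 : d * d ≤ Fintype.card G := by
    have : (d : ℝ) * d ≤ (Fintype.card G : ℝ) := by linarith
    exact_mod_cast this
  have hd1 : d ≤ 1 := by
    have h3 : d * d ≤ d * 1 := by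
      rw [mul_one]; exact le_trans hd2 hGd
    exact Nat.le_of_mul_le_mul_left h3 (Nat.pos_of_ne_zero hd0)
  have hG1 : Fintype.card G = 1 := by
    have hdle : Fintype.card G ≤ 1 := le_trans hGd hd1
    exact le_antisymm hdle Fintype.card_pos
  -- hence H = ⊥, contradiction
  apply hH
  rw [Subgroup.eq_bot_iff_forall]
  intro x _
  have := Fintype.card_le_one_iff.mp (le_of_eq hG1)
  exact this x 1
end

section
/- Let G be a non-Abelian finite group of order |G| = d + d² where d is the maximal irreducible character degree, and suppose there is a unique irreducible character χ of degree d. Then χ is rational-valued, Σ_{g∈G^#} χ(g) = −d, and Σ_{g∈G^#}|χ(g)|² = d if and only if χ(g) ∈ {0,−1} for all g ∈ G^#. -/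
open scoped BigOperators Classical
open CategoryTheory IntermediateField
set_option maxHeartbeats 2000000



namespace Stmt16Aux

variable {G : Type} [Group G]

/-- An invariant submodule of a simple `FDRep` which is nonzero must be everything. -/
lemma invariant_submodule_eq_top (W : FDRep ℂ G) [Simple W] (p : Submodule ℂ W)
    (hp : ∀ g : G, ∀ v ∈ p, W.ρ g v ∈ p) (hbot : p ≠ ⊥) : p = ⊤ := by
  classical
  let ρ' : Representation ℂ G p :=
    { toFun := fun g => (W.ρ g).restrict (hp g)
      map_one' := by
        ext v
        simp [LinearMap.restrict_apply]
      map_mul' := by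
        intro g h
        ext v
        simp [LinearMap.restrict_apply, Module.End.mul_apply] }
  haveI : FiniteDimensional ℂ p := inferInstance
  let Y : FDRep ℂ G := FDRep.of ρ'
  let f : Y ⟶ W :=
    { hom := FGModuleCat.ofHom p.subtype
      comm := by
        intro g
        ext v
        rfl }
  haveI : Mono f := by
    constructor
    intro Z u v huv
    have h1 := congrArg Action.Hom.hom huv
    have h2 : p.subtype.comp u.hom.hom.hom = p.subtype.comp v.hom.hom.hom :=
      congrArg (fun φ : Z.V ⟶ W.V => φ.hom.hom) h1
    apply Action.Hom.ext
    apply FGModuleCat.hom_ext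
    refine LinearMap.ext fun z => ?_
    exact Subtype.ext (congrArg (fun (F : _ →ₗ[ℂ] W) => F z) h2)
  have hf0 : f ≠ 0 := by
    obtain ⟨x, hx, hx0⟩ := Submodule.exists_mem_ne_zero_of_ne_bot hbot
    intro h
    have h5 : f.hom ⟨x, hx⟩ = 0 := by rw [h]; rfl
    have h6 : p.subtype ⟨x, hx⟩ = (0 : W) := h5
    rw [Submodule.subtype_apply] at h6
    exact hx0 h6
  haveI : IsIso f := isIso_of_mono_of_nonzero hf0
  rw [Submodule.eq_top_iff']
  intro w
  have hid : (inv f ≫ f) = 𝟙 W := IsIso.inv_hom_id f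
  have h1 := congrArg Action.Hom.hom hid
  have h2 : p.subtype ((inv f).hom w) = w := congrArg (fun (F : W.V ⟶ W.V) => F.hom.hom w) h1
  rw [Submodule.subtype_apply] at h2
  rw [← h2]
  exact ((inv f).hom w).2

end Stmt16Aux

namespace Stmt16Aux2
open Stmt16Aux

variable {G : Type} [Group G]

lemma sum_char_mul [Fintype G] (V : FDRep ℂ G) [Simple V] :
    ∑ g : G, V.character g * V.character g⁻¹ = (Fintype.card G : ℂ) := by
  have hne : (Nat.card G : ℂ) ≠ 0 := by exact_mod_cast Nat.card_pos.ne'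
  haveI : Invertible ((Nat.card G : ℂ)) := invertibleOfNonzero hne
  have h := FDRep.char_orthonormal V V
  rw [if_pos ⟨Iso.refl _⟩, inv_mul_eq_iff_eq_mul₀ hne] at h
  simpa [Nat.card_eq_fintype_card] using h

lemma sum_char_eq_zero [Fintype G] (V : FDRep ℂ G) [Simple V]
    (hnt : ∃ (g : G) (v : V), V.ρ g v ≠ v) :
    ∑ g : G, V.character g = 0 := by
  have hne : (Nat.card G : ℂ) ≠ 0 := by exact_mod_cast Nat.card_pos.ne'
  haveI : Invertible ((Nat.card G : ℂ)) := invertibleOfNonzero hne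
  have havg := FDRep.average_char_eq_finrank_invariants V
  have hinv : Representation.invariants V.ρ = ⊥ := by
    by_contra hb
    have htop := invariant_submodule_eq_top V (Representation.invariants V.ρ)
      (fun g v hv => by
        rw [Representation.mem_invariants] at hv ⊢
        intro h
        rw [hv g]
        exact hv h) hb
    obtain ⟨g, v, hgv⟩ := hnt
    have : v ∈ Representation.invariants V.ρ := htop ▸ Submodule.mem_top
    rw [Representation.mem_invariants] at this
    exact hgv (this g)
  rw [hinv, finrank_bot, Nat.cast_zero, mul_eq_zero] at havg
  exact havg.resolve_left (inv_ne_zero hne)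

end Stmt16Aux2



namespace Stmt16Aux3

variable {G : Type} [Group G]

lemma geom_sum_root {N : ℕ} (z : ℂ) (hz : z ^ N = 1) :
    ∑ j ∈ Finset.range N, z ^ j = if z = 1 then (N : ℂ) else 0 := by
  split_ifs with h
  · subst h; simp
  · have := geom_sum_eq h N
    rw [this, hz, sub_self, zero_div]

/-- spectral decomposition of character values on powers of an element -/
lemma spectral (V : FDRep ℂ G) {g : G} {N : ℕ} (hN : 0 < N) (hg : g ^ N = 1)
    {μ : ℂ} (hμ : IsPrimitiveRoot μ N) :
    ∃ c : ℕ → ℕ, ∀ k : ℕ,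
      V.character (g ^ k) = ∑ i ∈ Finset.range N, ((μ ^ i) ^ k) * (c i : ℂ) := by
  classical
  set A : Module.End ℂ V := V.ρ g with hA_def
  have hA : A ^ N = 1 := by rw [hA_def, ← map_pow, hg, map_one]
  have hNC : (N : ℂ) ≠ 0 := by exact_mod_cast hN.ne'
  have hμN : ∀ i : ℕ, (μ ^ i) ^ N = 1 := by
    intro i
    rw [← pow_mul, mul_comm, pow_mul, hμ.pow_eq_one, one_pow]
  have hμ0 : ∀ i : ℕ, (μ : ℂ) ^ i ≠ 0 := by
    intro i h
    have h2 := hμN i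
    rw [h, zero_pow hN.ne'] at h2
    exact one_ne_zero h2.symm
  have hpowmod : ∀ k : ℕ, μ ^ k = μ ^ (k % N) := by
    intro k
    conv_lhs => rw [← Nat.div_add_mod k N]
    rw [pow_add, pow_mul, hμ.pow_eq_one, one_pow, one_mul]
  have hApowmod : ∀ k : ℕ, A ^ k = A ^ (k % N) := by
    intro k
    conv_lhs => rw [← Nat.div_add_mod k N]
    rw [pow_add, pow_mul, hA, one_pow, one_mul]
  set S : ℕ → Module.End ℂ V := fun i =>
    ∑ j ∈ Finset.range N, ((μ ^ i) ^ j)⁻¹ • A ^ j with hS_def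
  set P : ℕ → Module.End ℂ V := fun i => (N : ℂ)⁻¹ • S i with hP_def
  have hAP : ∀ i, A * P i = (μ ^ i) • P i := by
    intro i
    set lam := (μ : ℂ) ^ i with hlam
    have hlam0 : lam ≠ 0 := hμ0 i
    have hlamN : lam ^ N = 1 := hμN i
    set f : ℕ → Module.End ℂ V := fun t => (lam * (lam ^ t)⁻¹) • A ^ t with hf
    have key : ∑ j ∈ Finset.range N, f (j + 1) = ∑ j ∈ Finset.range N, f j := by
      have h1 : ∑ j ∈ Finset.range (N + 1), f j
          = (∑ j ∈ Finset.range N, f (j + 1)) + f 0 := Finset.sum_range_succ' f N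
      have h2 : ∑ j ∈ Finset.range (N + 1), f j
          = (∑ j ∈ Finset.range N, f j) + f N := Finset.sum_range_succ f N
      have hfN : f N = f 0 := by
        simp only [hf, hlamN, pow_zero, hA, inv_one, mul_one]
      rw [hfN] at h2
      exact add_right_cancel (h1.symm.trans h2)
    have hAS : A * S i = ∑ j ∈ Finset.range N, f (j + 1) := by
      rw [hS_def]
      simp only []
      rw [Finset.mul_sum]
      refine Finset.sum_congr rfl fun j _ => ?_
      rw [mul_smul_comm, ← pow_succ']
      simp only [hf]
      congr 1
      rw [pow_succ, mul_inv_rev]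
      field_simp
      exact div_self (pow_ne_zero j hlam0)
    have hlamS : lam • S i = ∑ j ∈ Finset.range N, f j := by
      rw [hS_def]
      simp only []
      rw [Finset.smul_sum]
      refine Finset.sum_congr rfl fun j _ => ?_
      rw [smul_smul]
    calc A * P i = (N : ℂ)⁻¹ • (A * S i) := by rw [hP_def]; simp only []; rw [mul_smul_comm]
    _ = (N : ℂ)⁻¹ • (lam • S i) := by rw [hAS, key, hlamS]
    _ = lam • P i := by rw [hP_def]; simp only []; rw [smul_comm]
  have hApow : ∀ i k, A ^ k * P i = ((μ ^ i) ^ k) • P i := by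
    intro i k
    induction k with
    | zero => simp
    | succ k ih =>
      rw [pow_succ, mul_assoc, hAP i, mul_smul_comm, ih, smul_smul, pow_succ, mul_comm]
  have hPidem : ∀ i, P i * P i = P i := by
    intro i
    have h1 : P i * P i
        = (N : ℂ)⁻¹ • ∑ j ∈ Finset.range N, ((μ ^ i) ^ j)⁻¹ • (A ^ j * P i) := by
      conv_lhs => rw [hP_def]
      simp only []
      rw [smul_mul_assoc]
      congr 1
      rw [hS_def]
      simp only []
      rw [Finset.sum_mul]
      refine Finset.sum_congr rfl fun j _ => ?_
      rw [smul_mul_assoc]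
    rw [h1]
    have h2 : ∀ j ∈ Finset.range N, ((μ ^ i) ^ j)⁻¹ • (A ^ j * P i) = P i := by
      intro j _
      rw [hApow i j, smul_smul, inv_mul_cancel₀ (pow_ne_zero j (hμ0 i)), one_smul]
    rw [Finset.sum_congr rfl h2, Finset.sum_const, Finset.card_range,
      ← Nat.cast_smul_eq_nsmul ℂ, smul_smul, inv_mul_cancel₀ hNC, one_smul]
  have hKSL : ∀ k : ℕ, ∑ i ∈ Finset.range N, ((μ ^ i) ^ k) • P i = A ^ k := by
    intro k
    have expand : ∀ i, ((μ ^ i) ^ k) • P i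
        = (N : ℂ)⁻¹ • ∑ j ∈ Finset.range N, ((μ ^ k / μ ^ j) ^ i) • A ^ j := by
      intro i
      have e1 : ((μ ^ i) ^ k) • S i
          = ∑ j ∈ Finset.range N, ((μ ^ k / μ ^ j) ^ i) • A ^ j := by
        rw [hS_def]
        simp only []
        rw [Finset.smul_sum]
        refine Finset.sum_congr rfl fun j _ => ?_
        rw [smul_smul]
        congr 1
        rw [div_pow, ← pow_mul, ← pow_mul, ← pow_mul, ← pow_mul,
          mul_comm i k, mul_comm i j, div_eq_mul_inv]
      rw [hP_def]
      simp only []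
      rw [smul_comm, e1]
    rw [Finset.sum_congr rfl (fun i _ => expand i), ← Finset.smul_sum, Finset.sum_comm]
    have inner : ∀ j ∈ Finset.range N,
        ∑ i ∈ Finset.range N, ((μ ^ k / μ ^ j) ^ i) • A ^ j
          = (if j = k % N then (N : ℂ) else 0) • A ^ j := by
      intro j hj
      rw [← Finset.sum_smul]
      congr 1
      have hzN : (μ ^ k / μ ^ j) ^ N = 1 := by
        rw [div_pow, ← pow_mul, ← pow_mul, mul_comm k N, mul_comm j N,
          pow_mul, pow_mul, hμ.pow_eq_one, one_pow, one_pow, one_div, inv_one]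
      rw [geom_sum_root _ hzN]
      have hcond : (μ ^ k / μ ^ j = 1) ↔ (j = k % N) := by
        rw [div_eq_one_iff_eq (hμ0 j)]
        constructor
        · intro h
          have hj' := Finset.mem_range.mp hj
          have : μ ^ (k % N) = μ ^ j := by rw [← hpowmod, h]
          exact (hμ.pow_inj (Nat.mod_lt k hN) hj' this).symm
        · intro h
          rw [h, ← hpowmod]
      rw [if_congr hcond rfl rfl]
    rw [Finset.sum_congr rfl inner]
    simp only [ite_smul, zero_smul]
    rw [Finset.sum_ite_eq' (Finset.range N) (k % N) (fun j => (N : ℂ) • A ^ j)]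
    rw [if_pos (Finset.mem_range.mpr (Nat.mod_lt k hN))]
    rw [smul_smul, inv_mul_cancel₀ hNC, one_smul, ← hApowmod]
  -- extract the trace
  refine ⟨fun i => Module.finrank ℂ (LinearMap.range (P i)), fun k => ?_⟩
  have htraceP : ∀ i, LinearMap.trace ℂ V (P i)
      = (Module.finrank ℂ (LinearMap.range (P i)) : ℂ) := by
    intro i
    have hproj : LinearMap.IsProj (LinearMap.range (P i)) (P i) := by
      refine ⟨fun x => LinearMap.mem_range_self _ x, ?_⟩
      rintro x ⟨y, rfl⟩
      have := congrArg (fun (F : Module.End ℂ V) => F y) (hPidem i)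
      exact this
    exact hproj.trace
  have hchar : V.character (g ^ k) = LinearMap.trace ℂ V (A ^ k) := by
    rw [FDRep.character, map_pow, hA_def]
  rw [hchar, ← hKSL k, map_sum]
  refine Finset.sum_congr rfl fun i _ => ?_
  rw [LinearMap.map_smul, htraceP i, smul_eq_mul]

end Stmt16Aux3



namespace Stmt16Aux4

lemma cyclo_setup {N : ℕ} (hN : 2 ≤ N) {μ : ℂ} (hμ : IsPrimitiveRoot μ N) :
    IsCyclotomicExtension {N} ℚ ℚ⟮μ⟯ := by
  haveI : NeZero N := ⟨by omega⟩
  set N' : ℕ+ := ⟨N, by omega⟩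
  set μt : ℚ⟮μ⟯ := ⟨μ, IntermediateField.mem_adjoin_simple_self ℚ μ⟩ with hμt_def
  have hμtprim : IsPrimitiveRoot μt N := by
    rw [← IsPrimitiveRoot.coe_submonoidClass_iff]
    exact hμ
  have hint : IsIntegral ℚ μ := by
    refine ⟨Polynomial.X ^ N - Polynomial.C 1, ?_, ?_⟩
    · exact Polynomial.monic_X_pow_sub_C 1 (by omega)
    · simp [hμ.pow_eq_one]
  have htop : Algebra.adjoin ℚ ({μt} : Set ℚ⟮μ⟯) = ⊤ := by
    have := (IntermediateField.adjoin.powerBasis hint).adjoin_gen_eq_top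
    rw [IntermediateField.adjoin.powerBasis_gen] at this
    convert this <;> first | rfl | exact Subsingleton.elim _ _
  constructor
  · intro n hn _
    rw [Set.mem_singleton_iff] at hn
    subst hn
    exact ⟨μt, hμtprim⟩
  · intro x
    have hsub : ({μt} : Set ℚ⟮μ⟯) ⊆ {b : ℚ⟮μ⟯ | ∃ n : ℕ, n ∈ ({N} : Set ℕ) ∧ n ≠ 0 ∧ b ^ n = 1} := by
      rintro b rfl
      exact ⟨N, rfl, by omega, hμtprim.pow_eq_one⟩
    have := Algebra.adjoin_mono (R := ℚ) hsub
    rw [htop] at this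
    exact this (Algebra.mem_top)

end Stmt16Aux4

namespace KNT

/-- Key number-theoretic lemma about Galois-stable families of root-of-unity sums. -/
lemma knt {N : ℕ} [NeZero N] (hN : 2 ≤ N) {μ : ℂ} (hμ : IsPrimitiveRoot μ N)
    (c : ℕ → ℕ) (v : ℕ → ℂ)
    (hv : ∀ k, v k = ∑ i ∈ Finset.range N, ((μ ^ i) ^ k) * (c i : ℂ)) :
    0 ≤ ∑ k : (ZMod N)ˣ, (Complex.normSq (v ((k : ZMod N).val)) + (v ((k : ZMod N).val)).re)
    ∧ ((∑ k : (ZMod N)ˣ, (Complex.normSq (v ((k : ZMod N).val)) + (v ((k : ZMod N).val)).re)) = 0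
       → (v 1) ^ 2 + v 1 = 0) := by
  classical
  set N' : ℕ+ := ⟨N, by omega⟩ with hN'_def
  set E := ℚ⟮μ⟯ with hE_def
  haveI hcyc : IsCyclotomicExtension {N} ℚ E := Stmt16Aux4.cyclo_setup hN hμ
  set μt : E := ⟨μ, IntermediateField.mem_adjoin_simple_self ℚ μ⟩ with hμt_def
  have hμtprim : IsPrimitiveRoot μt N := by
    rw [← IsPrimitiveRoot.coe_submonoidClass_iff]; exact hμ
  have hμtprim' : IsPrimitiveRoot μt ((N' : ℕ+) : ℕ) := hμtprim
  have hirr : Irreducible (Polynomial.cyclotomic N ℚ) :=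
    Polynomial.cyclotomic.irreducible_rat (by omega)
  haveI hfin : FiniteDimensional ℚ E :=
    IsCyclotomicExtension.finiteDimensional {N} ℚ E
  haveI hgal : IsGalois ℚ E := IsCyclotomicExtension.isGalois {N} ℚ E
  -- the Galois-action-to-power map is bijective
  set e : (E ≃ₐ[ℚ] E) →* (ZMod N)ˣ := hμtprim.autToPow ℚ with he_def
  have hcardeq : Fintype.card (E ≃ₐ[ℚ] E) = Fintype.card (ZMod N)ˣ := by
    rw [Fintype.card_eq_nat_card, IsGalois.card_aut_eq_finrank, IsCyclotomicExtension.finrank E hirr,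
      ZMod.card_units_eq_totient]
  have hebij : Function.Bijective e :=
    (Fintype.bijective_iff_injective_and_card e).mpr
      ⟨hμtprim.autToPow_injective ℚ, hcardeq⟩
  -- the element x
  set x : E := ∑ i ∈ Finset.range N, (c i : E) * μt ^ i with hx_def
  have hcoex : ∀ t : ℕ, algebraMap E ℂ (∑ i ∈ Finset.range N, (c i : E) * (μt ^ t) ^ i) = v t := by
    intro t
    rw [map_sum, hv t]
    refine Finset.sum_congr rfl fun i _ => ?_
    rw [map_mul, map_natCast, map_pow, map_pow]
    have : algebraMap E ℂ μt = μ := rfl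
    rw [this, ← pow_mul, mul_comm t i, pow_mul, mul_comm]
  have hx1 : algebraMap E ℂ x = v 1 := by
    rw [hx_def]
    simpa using hcoex 1
  have hσx : ∀ σ : E ≃ₐ[ℚ] E, algebraMap E ℂ (σ x) = v ((e σ : ZMod N).val) := by
    intro σ
    have hspec : μt ^ ((e σ : ZMod N).val) = σ μt := hμtprim.autToPow_spec ℚ σ
    have hσx2 : σ x = ∑ i ∈ Finset.range N, (c i : E) * (μt ^ ((e σ : ZMod N).val)) ^ i := by
      rw [hx_def, map_sum]
      refine Finset.sum_congr rfl fun i _ => ?_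
      rw [map_mul, map_natCast, map_pow, hspec]
    rw [hσx2, hcoex]
  -- integrality
  have hintμt : IsIntegral ℤ μt := by
    refine ⟨Polynomial.X ^ N - Polynomial.C 1, ?_, ?_⟩
    · exact Polynomial.monic_X_pow_sub_C 1 (by omega)
    · simp [hμtprim.pow_eq_one]
  have hintx : IsIntegral ℤ x := by
    have : x ∈ integralClosure ℤ E := by
      refine Subalgebra.sum_mem _ fun i _ => Subalgebra.mul_mem _ ?_ ?_
      · exact Subalgebra.natCast_mem _ _
      · exact Subalgebra.pow_mem _ hintμt i
    exact this
  haveI htower : IsScalarTower ℤ ℚ E := inferInstance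
  -- norm bound
  have hnorm : ∀ z : E, IsIntegral ℤ z → z ≠ 0 →
      1 ≤ ‖∏ σ : E ≃ₐ[ℚ] E, algebraMap E ℂ (σ z)‖ := by
    intro z hzint hz0
    have h1 : ∏ σ : E ≃ₐ[ℚ] E, σ z = algebraMap ℚ E (Algebra.norm ℚ z) :=
      (Algebra.norm_eq_prod_automorphisms ℚ z).symm
    have h2 : ∏ σ : E ≃ₐ[ℚ] E, algebraMap E ℂ (σ z)
        = algebraMap E ℂ (∏ σ : E ≃ₐ[ℚ] E, σ z) := (map_prod (algebraMap E ℂ) _ _).symm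
    rw [h2, h1, ← IsScalarTower.algebraMap_apply ℚ E ℂ, eq_ratCast]
    have hqint : IsIntegral ℤ (Algebra.norm ℚ z) := Algebra.isIntegral_norm ℚ hzint
    obtain ⟨m, hm⟩ := IsIntegrallyClosed.isIntegral_iff.mp hqint
    have hq0 : Algebra.norm ℚ z ≠ 0 := Algebra.norm_ne_zero_iff.mpr hz0
    have hm0 : m ≠ 0 := by rintro rfl; apply hq0; rw [← hm]; simp
    rw [← hm]
    have : ((algebraMap ℤ ℚ m : ℚ) : ℂ) = (m : ℂ) := by simp
    rw [this, Complex.norm_intCast]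
    have h3 : (1 : ℤ) ≤ |m| := Int.one_le_abs (by exact_mod_cast hm0)
    calc (1 : ℝ) ≤ (|m| : ℝ) := by exact_mod_cast h3
    _ = |(m : ℝ)| := by push_cast; ring
  -- reindex sums over units as sums over automorphisms
  have hsum : ∀ f : (ZMod N)ˣ → ℝ, ∑ k : (ZMod N)ˣ, f k = ∑ σ : E ≃ₐ[ℚ] E, f (e σ) :=
    fun f => (Fintype.sum_bijective e hebij _ f (fun σ => rfl)).symm
  set m := Fintype.card (E ≃ₐ[ℚ] E) with hm_def
  have hm1 : 1 ≤ m := Fintype.card_pos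
  set Z : (E ≃ₐ[ℚ] E) → ℂ := fun σ => algebraMap E ℂ (σ x) with hZ_def
  set W : (E ≃ₐ[ℚ] E) → ℂ := fun σ => 2 * Z σ + 1 with hW_def
  set t : (E ≃ₐ[ℚ] E) → ℝ := fun σ => Complex.normSq (W σ) with ht_def
  have hWint : ∀ σ, W σ = algebraMap E ℂ (σ (2 * x + 1)) := by
    intro σ
    rw [map_add, map_mul, map_add, map_mul, map_one, map_ofNat, map_ofNat, map_one]
  have hquarter : ∀ z : ℂ, Complex.normSq z + z.re = (Complex.normSq (2*z+1) - 1)/4 := by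
    intro z
    have hre : (2*z+1).re = 2*z.re + 1 := by simp
    have him : (2*z+1).im = 2*z.im := by simp
    rw [Complex.normSq_apply, Complex.normSq_apply, hre, him]
    ring
  have hFform : ∑ k : (ZMod N)ˣ, (Complex.normSq (v ((k : ZMod N).val))
        + (v ((k : ZMod N).val)).re) = (∑ σ : E ≃ₐ[ℚ] E, t σ - m)/4 := by
    rw [hsum]
    have : ∀ σ : E ≃ₐ[ℚ] E, Complex.normSq (v ((e σ : ZMod N).val))
        + (v ((e σ : ZMod N).val)).re = (t σ - 1)/4 := by
      intro σ
      rw [← hσx σ]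
      have := hquarter (algebraMap E ℂ (σ x))
      rw [this]
    rw [Finset.sum_congr rfl (fun σ _ => this σ)]
    rw [← Finset.sum_div, Finset.sum_sub_distrib, Finset.sum_const, Finset.card_univ,
      nsmul_eq_mul, mul_one]
  -- nonnegativity and strictness via products
  have hprod_t : (1:ℝ) ≤ ∏ σ : E ≃ₐ[ℚ] E, t σ := by
    have hw0 : (2 * x + 1 : E) ≠ 0 := by
      intro h
      have hxval : x = algebraMap ℚ E (-(1/2)) := by
        have : (2 : E) * x = -1 := by linear_combination h
        simp only [map_neg, map_div₀, map_one, map_ofNat]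
        linear_combination (1/2 : E) * this
      rw [hxval] at hintx
      have : IsIntegral ℤ (-(1/2) : ℚ) :=
        (isIntegral_algebraMap_iff ((algebraMap ℚ E).injective)).mp hintx
      obtain ⟨z, hz⟩ := IsIntegrallyClosed.isIntegral_iff.mp this
      have : (z : ℚ) = -(1/2) := by exact_mod_cast hz
      have h2 : (2 : ℚ) * z = -1 := by linear_combination 2 * this
      have : (2 : ℤ) * z = -1 := by exact_mod_cast h2
      omega
    have hint2 : IsIntegral ℤ (2 * x + 1 : E) := by
      have : (2 * x + 1 : E) ∈ integralClosure ℤ E := by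
        refine Subalgebra.add_mem _ (Subalgebra.mul_mem _ ?_ hintx) (Subalgebra.one_mem _)
        have h2m : ((2 : ℕ) : E) ∈ integralClosure ℤ E := Subalgebra.natCast_mem _ 2
        exact_mod_cast h2m
      exact this
    have h1 := hnorm _ hint2 hw0
    have h2 : ∏ σ : E ≃ₐ[ℚ] E, t σ
        = Complex.normSq (∏ σ : E ≃ₐ[ℚ] E, algebraMap E ℂ (σ (2 * x + 1))) := by
      rw [map_prod Complex.normSq]
      exact Finset.prod_congr rfl fun σ _ => by rw [ht_def]; simp only []; rw [hWint σ]
    rw [h2, Complex.normSq_eq_norm_sq]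
    nlinarith [h1]
  have hprod_le : ∀ s : ℝ, (∑ σ : E ≃ₐ[ℚ] E, t σ) ≤ s →
      (∏ σ : E ≃ₐ[ℚ] E, t σ) ≤ Real.exp (s - m) := by
    intro s hs
    calc (∏ σ : E ≃ₐ[ℚ] E, t σ) ≤ ∏ σ : E ≃ₐ[ℚ] E, Real.exp (t σ - 1) := by
          refine Finset.prod_le_prod (fun σ _ => Complex.normSq_nonneg _) fun σ _ => ?_
          have := Real.add_one_le_exp (t σ - 1)
          linarith
    _ = Real.exp (∑ σ : E ≃ₐ[ℚ] E, (t σ - 1)) := (Real.exp_sum _ _).symm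
    _ ≤ Real.exp (s - m) := by
          apply Real.exp_le_exp.mpr
          rw [Finset.sum_sub_distrib, Finset.sum_const, Finset.card_univ, nsmul_eq_mul, mul_one]
          linarith
  have hsum_ge : (m : ℝ) ≤ ∑ σ : E ≃ₐ[ℚ] E, t σ := by
    by_contra hlt
    push_neg at hlt
    have h1 := hprod_le _ (le_refl _)
    have h2 : Real.exp ((∑ σ : E ≃ₐ[ℚ] E, t σ) - m) < 1 := by
      rw [Real.exp_lt_one_iff]
      linarith
    linarith [hprod_t]
  constructor
  · -- nonnegativity
    rw [hFform]
    have := Fintype.card_pos (α := (E ≃ₐ[ℚ] E))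
    linarith
  · -- the main conclusion
    intro h0
    rw [hFform] at h0
    have hsum_eq : ∑ σ : E ≃ₐ[ℚ] E, t σ = (m : ℝ) := by linarith
    -- suppose x^2 + x ≠ 0
    have hy : x ^ 2 + x = 0 := by
      by_contra hy0
      have hinty : IsIntegral ℤ (x ^ 2 + x) := by
        have : (x ^ 2 + x : E) ∈ integralClosure ℤ E :=
          Subalgebra.add_mem _ (Subalgebra.pow_mem _ hintx 2) hintx
        exact this
      have h1 := hnorm _ hinty hy0
      have habs : ∀ σ : E ≃ₐ[ℚ] E, ‖algebraMap E ℂ (σ (x ^ 2 + x))‖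
          ≤ Real.exp ((t σ - 1)/2) * (1/2) := by
        intro σ
        have hmap : algebraMap E ℂ (σ (x ^ 2 + x)) = (Z σ) ^ 2 + Z σ := by
          rw [map_add, map_pow, map_add, map_pow]
        have hzw : (Z σ) ^ 2 + Z σ = ((W σ) ^ 2 - 1)/4 := by
          rw [hW_def]
          simp only []
          ring
        have hb1 : ‖(Z σ) ^ 2 + Z σ‖ ≤ (t σ + 1)/4 := by
          rw [hzw]
          rw [norm_div]
          have h4 : ‖(4 : ℂ)‖ = 4 := by norm_num [Complex.norm_ofNat]
          rw [h4]
          have : ‖(W σ) ^ 2 - 1‖ ≤ ‖W σ‖ ^ 2 + 1 := by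
            calc ‖(W σ) ^ 2 - 1‖
                ≤ ‖(W σ) ^ 2‖ + ‖(1 : ℂ)‖ := by
                  exact (norm_sub_le _ _)
            _ = ‖W σ‖ ^ 2 + 1 := by rw [norm_pow, norm_one]
          have ht : ‖W σ‖ ^ 2 = t σ := by
            rw [ht_def]
            simp only []
            rw [Complex.sq_norm]
          rw [ht] at this
          linarith
        have hb2 : (t σ + 1)/4 ≤ Real.exp ((t σ - 1)/2) * (1/2) := by
          have := Real.add_one_le_exp ((t σ - 1)/2)
          nlinarith [Real.exp_nonneg ((t σ - 1)/2)]
        rw [hmap]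
        linarith
      have hub : ‖∏ σ : E ≃ₐ[ℚ] E, algebraMap E ℂ (σ (x ^ 2 + x))‖
          ≤ (1/2 : ℝ) ^ m := by
        rw [norm_prod]
        calc ∏ σ : E ≃ₐ[ℚ] E, ‖algebraMap E ℂ (σ (x ^ 2 + x))‖
            ≤ ∏ σ : E ≃ₐ[ℚ] E, (Real.exp ((t σ - 1)/2) * (1/2)) := by
              refine Finset.prod_le_prod (fun σ _ => norm_nonneg _) fun σ _ => habs σ
        _ = (∏ σ : E ≃ₐ[ℚ] E, Real.exp ((t σ - 1)/2)) * (1/2) ^ m := by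
              rw [Finset.prod_mul_distrib, Finset.prod_const, Finset.card_univ]
        _ = Real.exp (∑ σ : E ≃ₐ[ℚ] E, ((t σ - 1)/2)) * (1/2) ^ m := by
              rw [Real.exp_sum]
        _ = (1/2 : ℝ) ^ m := by
              have : ∑ σ : E ≃ₐ[ℚ] E, ((t σ - 1)/2) = 0 := by
                rw [← Finset.sum_div, Finset.sum_sub_distrib, Finset.sum_const,
                  Finset.card_univ, nsmul_eq_mul, mul_one, hsum_eq]
                simp [hm_def]
              rw [this, Real.exp_zero, one_mul]
      have hhalf : ((1:ℝ)/2) ^ m < 1 := by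
        apply pow_lt_one₀ (by norm_num) (by norm_num)
        omega
      linarith
    -- conclude
    have := congrArg (algebraMap E ℂ) hy
    rw [map_add, map_pow, map_zero, hx1] at this
    exact this

end KNT

lemma conj_eq {N : ℕ} (hN : 0 < N) {μ : ℂ} (hμ : IsPrimitiveRoot μ N) (c : ℕ → ℕ) (v : ℕ → ℂ)
    (hv : ∀ k, v k = ∑ i ∈ Finset.range N, ((μ ^ i) ^ k) * (c i : ℂ)) :
    ∀ k, (starRingEnd ℂ) (v k) = v (k * (N - 1)) := by
  have habs1 : ∀ z : ℂ, z ^ N = 1 → Complex.normSq z = 1 := by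
    intro z hz
    have h1 : (Complex.normSq z) ^ N = 1 := by
      rw [← map_pow, hz, map_one]
    have h0 : 0 ≤ Complex.normSq z := Complex.normSq_nonneg z
    rcases lt_trichotomy (Complex.normSq z) 1 with h | h | h
    · exfalso
      have := pow_lt_one₀ h0 h hN.ne'
      rw [h1] at this
      exact lt_irrefl _ this
    · exact h
    · exfalso
      have := one_lt_pow₀ h hN.ne'
      rw [h1] at this
      exact lt_irrefl _ this
  intro k
  rw [hv k, hv (k * (N - 1)), map_sum]
  refine Finset.sum_congr rfl fun i _ => ?_
  rw [map_mul, map_natCast]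
  congr 1
  set z : ℂ := (μ ^ i) ^ k with hz_def
  have hzN : z ^ N = 1 := by
    rw [hz_def, ← pow_mul, ← pow_mul]
    have he : i * (k * N) = N * (i * k) := by ring
    rw [he, pow_mul, hμ.pow_eq_one, one_pow]
  have hz0 : z ≠ 0 := by
    intro h
    rw [h, zero_pow hN.ne'] at hzN
    exact one_ne_zero hzN.symm
  have h1 : z * (starRingEnd ℂ) z = 1 := by
    rw [Complex.mul_conj, habs1 z hzN, Complex.ofReal_one]
  have h2 : z * z ^ (N - 1) = 1 := by
    rw [← pow_succ']
    have : N - 1 + 1 = N := by omega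
    rw [this, hzN]
  have h3 : (starRingEnd ℂ) z = z ^ (N - 1) := by
    have := mul_left_cancel₀ hz0 (h1.trans h2.symm)
    exact this
  rw [h3, hz_def, ← pow_mul, ← pow_mul]


/-- For non-Abelian `G` of order `d + d²` with a unique irreducible character `χ` of maximal
degree `d`: `χ` is rational-valued, `Σ_{g≠1} χ(g) = −d`, and `Σ_{g≠1}|χ(g)|² = d` iff
`χ(g) ∈ {0,−1}` on `G^#`. -/
theorem stmt16 (G : Type) [Group G] [Fintype G]
    (hnab : ¬ ∀ x y : G, x * y = y * x) (d : ℕ)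
    (hd : IsGreatest {n : ℕ | ∃ χ : G → ℂ, IsIrrChar G χ ∧ χ 1 = (n : ℂ)} d)
    (hcard : Fintype.card G = d + d ^ 2)
    (χ : G → ℂ) (hχ : IsIrrChar G χ) (hχd : χ 1 = (d : ℂ))
    (huniq : ∀ ψ : G → ℂ, IsIrrChar G ψ → ψ 1 = (d : ℂ) → ψ = χ) :
    (∀ g : G, ∃ q : ℚ, χ g = (q : ℂ)) ∧
      (∑ g ∈ Finset.univ.filter (· ≠ (1 : G)), χ g = -(d : ℂ)) ∧
      ((∑ g ∈ Finset.univ.filter (· ≠ (1 : G)), Complex.normSq (χ g) = (d : ℝ)) ↔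
        ∀ g : G, g ≠ 1 → χ g = 0 ∨ χ g = -1) := by
  classical
  obtain ⟨V, hsimp, hcharV⟩ := hχ
  haveI := hsimp
  obtain ⟨N, hN_def⟩ : ∃ N, N = Fintype.card G := ⟨_, rfl⟩
  rw [← hN_def] at hcard
  have hNpos : 0 < N := hN_def ▸ Fintype.card_pos
  have hfinrank : (d : ℂ) = (Module.finrank ℂ V : ℂ) := by
    rw [← hχd, hcharV 1, FDRep.char_one]
  have hd0 : d ≠ 0 := by
    intro h
    rw [h] at hcard
    simp at hcard
    omega
  have habel2 : N = 2 → False := by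
    intro h2
    apply hnab
    intro x y
    have hsq : ∀ z : G, z * z = 1 := by
      intro z
      have h3 : z ^ Fintype.card G = 1 := pow_card_eq_one
      rw [← hN_def, h2, pow_two] at h3
      exact h3
    have hxinv : ∀ z : G, z⁻¹ = z := fun z => inv_eq_of_mul_eq_one_right (hsq z)
    calc x * y = (x * y)⁻¹ := (hxinv _).symm
    _ = y⁻¹ * x⁻¹ := mul_inv_rev x y
    _ = y * x := by rw [hxinv, hxinv]
  have hd1 : d ≠ 1 := by
    intro h
    apply habel2
    rw [hcard, h]
    norm_num
  have hN2 : 2 ≤ N := by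
    have hd2 : 2 ≤ d := by omega
    rw [hcard, pow_two]
    nlinarith
  haveI : NeZero N := ⟨by omega⟩
  have hNC0 : (N : ℂ) ≠ 0 := by exact_mod_cast hNpos.ne'
  -- sum of character values
  have hsummul : ∑ g : G, χ g * χ g⁻¹ = (N : ℂ) := by
    rw [Finset.sum_congr rfl (fun g _ => by rw [hcharV g, hcharV g⁻¹]), hN_def]
    exact Stmt16Aux2.sum_char_mul V
  have hsum0 : ∑ g : G, χ g = 0 := by
    rw [Finset.sum_congr rfl (fun g _ => hcharV g)]
    apply Stmt16Aux2.sum_char_eq_zero V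
    by_contra hc
    push_neg at hc
    have hchar_all : ∀ g : G, V.character g = (d : ℂ) := by
      intro g
      have hrid : V.ρ g = LinearMap.id := LinearMap.ext (hc g)
      rw [FDRep.character, hrid]
      rw [hfinrank]
      exact LinearMap.trace_id ℂ V
    have hmul := Stmt16Aux2.sum_char_mul V
    rw [Finset.sum_congr rfl (fun g _ => by rw [hchar_all g, hchar_all g⁻¹])] at hmul
    rw [Finset.sum_const, Finset.card_univ, nsmul_eq_mul, ← hN_def] at hmul
    have hd2 : (d : ℂ) * d = 1 := mul_left_cancel₀ hNC0 (by rw [hmul, mul_one])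
    have hd3 : (d : ℕ) * d = 1 := by exact_mod_cast hd2
    exact hd1 (Nat.dvd_one.mp ⟨d, hd3.symm⟩)
  set μ : ℂ := Complex.exp (2 * Real.pi * Complex.I / N) with hμ_def
  have hμ : IsPrimitiveRoot μ N := Complex.isPrimitiveRoot_exp N (by omega)
  -- the crucial pointwise statement
  have H : ∀ g : G, g ≠ 1 → χ g = 0 ∨ χ g = -1 := by
    set F : G → ℂ := fun g => χ g * χ g⁻¹ + χ g with hF_def
    have hFsum : ∑ g : G, F g = (N : ℂ) := by
      rw [hF_def, Finset.sum_add_distrib, hsummul, hsum0, add_zero]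
    have hcop : ∀ k : (ZMod N)ˣ, (Nat.card G).Coprime ((k : ZMod N).val) := by
      intro k
      rw [Nat.card_eq_fintype_card, ← hN_def]
      exact (ZMod.val_coe_unit_coprime k).symm
    have hreidx : ∀ k : (ZMod N)ˣ, ∑ g : G, F (g ^ (k : ZMod N).val) = (N : ℂ) := by
      intro k
      rw [← hFsum]
      have h := Equiv.sum_comp (powCoprime (hcop k)) F
      simp only [powCoprime_apply] at h
      exact h
    have hdouble : ∑ g : G, (∑ k : (ZMod N)ˣ, F (g ^ (k : ZMod N).val))
        = (Fintype.card (ZMod N)ˣ : ℂ) * (N : ℂ) := by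
      rw [Finset.sum_comm, Finset.sum_congr rfl (fun k _ => hreidx k), Finset.sum_const,
        Finset.card_univ, nsmul_eq_mul]
    have hF1 : (∑ k : (ZMod N)ˣ, F ((1 : G) ^ (k : ZMod N).val))
        = (Fintype.card (ZMod N)ˣ : ℂ) * (N : ℂ) := by
      have hF1v : F (1 : G) = (N : ℂ) := by
        rw [hF_def]
        simp only [inv_one]
        rw [hχd, hcard]
        push_cast
        ring
      simp only [one_pow]
      rw [hF1v, Finset.sum_const, Finset.card_univ, nsmul_eq_mul]
    have hrest : ∑ g ∈ Finset.univ.erase (1 : G),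
        (∑ k : (ZMod N)ˣ, F (g ^ (k : ZMod N).val)) = 0 := by
      have h := Finset.sum_erase_add Finset.univ
        (fun g => (∑ k : (ZMod N)ˣ, F (g ^ (k : ZMod N).val))) (Finset.mem_univ (1 : G))
      beta_reduce at h
      rw [hdouble, hF1] at h
      linear_combination h
    have hkey : ∀ g : G,
        (0 ≤ (∑ k : (ZMod N)ˣ, F (g ^ (k : ZMod N).val)).re)
        ∧ ((∑ k : (ZMod N)ˣ, F (g ^ (k : ZMod N).val)).re = 0 → χ g * (χ g + 1) = 0) := by
      intro g
      obtain ⟨c, hc⟩ := Stmt16Aux3.spectral V hNpos (hN_def ▸ (pow_card_eq_one (x := g))) hμ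
      set v : ℕ → ℂ := fun k => V.character (g ^ k) with hv_def
      have hv : ∀ k, v k = ∑ i ∈ Finset.range N, ((μ ^ i) ^ k) * (c i : ℂ) := hc
      have hconj := conj_eq hNpos hμ c v hv
      have hterm : ∀ k : (ZMod N)ˣ, F (g ^ (k : ZMod N).val)
          = (Complex.normSq (v ((k : ZMod N).val)) : ℂ) + v ((k : ZMod N).val) := by
        intro k
        set t := (k : ZMod N).val with ht_def
        have h1 : χ (g ^ t) = v t := hcharV (g ^ t)
        have hinv : (g ^ t)⁻¹ = g ^ (t * (N - 1)) := by
          have hmul1 : g ^ (t * (N - 1)) * g ^ t = 1 := by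
            rw [← pow_add]
            have he : t * (N - 1) + t = t * N := by
              have hN1 : N - 1 + 1 = N := by omega
              calc t * (N - 1) + t = t * ((N - 1) + 1) := by ring
              _ = t * N := by rw [hN1]
            rw [he, mul_comm, pow_mul, hN_def, pow_card_eq_one, one_pow]
          exact inv_eq_of_mul_eq_one_left hmul1
        have h2 : χ ((g ^ t)⁻¹) = (starRingEnd ℂ) (v t) := by
          rw [hinv, hcharV]
          exact (hconj t).symm
        rw [hF_def]
        simp only []
        rw [h1, h2, Complex.mul_conj]
      have hRg : (∑ k : (ZMod N)ˣ, F (g ^ (k : ZMod N).val)).re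
          = ∑ k : (ZMod N)ˣ, (Complex.normSq (v ((k : ZMod N).val))
              + (v ((k : ZMod N).val)).re) := by
        rw [Finset.sum_congr rfl (fun k _ => hterm k), Complex.re_sum]
        refine Finset.sum_congr rfl fun k _ => ?_
        simp [Complex.add_re, Complex.ofReal_re]
      have hknt := KNT.knt (by omega : 2 ≤ N) hμ c v hv
      constructor
      · rw [hRg]; exact hknt.1
      · intro h0
        rw [hRg] at h0
        have := hknt.2 h0
        have hv1 : v 1 = χ g := by
          rw [hv_def]
          simp only [pow_one]
          exact (hcharV g).symm
        rw [hv1] at this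
        linear_combination this
    intro g hg
    have hre : ∑ g ∈ Finset.univ.erase (1 : G),
        (∑ k : (ZMod N)ˣ, F (g ^ (k : ZMod N).val)).re = 0 := by
      rw [← Complex.re_sum, hrest, Complex.zero_re]
    have hzero : ∀ h ∈ Finset.univ.erase (1 : G),
        (∑ k : (ZMod N)ˣ, F (h ^ (k : ZMod N).val)).re = 0 := by
      rw [← Finset.sum_eq_zero_iff_of_nonneg (fun h _ => (hkey h).1)]
      exact hre
    have hmem : g ∈ Finset.univ.erase (1 : G) := Finset.mem_erase.mpr ⟨hg, Finset.mem_univ g⟩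
    have := (hkey g).2 (hzero g hmem)
    rcases mul_eq_zero.mp this with h | h
    · exact Or.inl h
    · exact Or.inr (by linear_combination h)
  -- conclusion 2 : the sum over nonidentity elements
  have hfilter : Finset.univ.filter (· ≠ (1 : G)) = Finset.univ.erase (1 : G) := by
    ext g
    simp [Finset.mem_erase, and_comm]
  have hsum_ne : ∑ g ∈ Finset.univ.filter (· ≠ (1 : G)), χ g = -(d : ℂ) := by
    rw [hfilter]
    have h := Finset.sum_erase_add Finset.univ χ (Finset.mem_univ (1 : G))
    rw [hsum0, hχd] at h
    linear_combination h
  refine ⟨?_, hsum_ne, ?_⟩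
  · intro g
    by_cases hg : g = 1
    · exact ⟨d, by rw [hg, hχd]; simp⟩
    · rcases H g hg with h | h
      · exact ⟨0, by rw [h]; simp⟩
      · exact ⟨-1, by rw [h]; simp⟩
  · constructor
    · intro _ g hg
      exact H g hg
    · intro _
      have hterm : ∀ g ∈ Finset.univ.filter (· ≠ (1 : G)),
          ((Complex.normSq (χ g) : ℂ)) = -χ g := by
        intro g hg
        rcases H g (Finset.mem_filter.mp hg).2 with h | h <;> rw [h] <;> simp
      have hc : ∑ g ∈ Finset.univ.filter (· ≠ (1 : G)), ((Complex.normSq (χ g) : ℂ))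
          = (d : ℂ) := by
        rw [Finset.sum_congr rfl hterm, Finset.sum_neg_distrib, hsum_ne]
        ring
      have : ((∑ g ∈ Finset.univ.filter (· ≠ (1 : G)), Complex.normSq (χ g) : ℝ) : ℂ)
          = ((d : ℝ) : ℂ) := by
        push_cast
        push_cast at hc
        exact hc
      exact_mod_cast this
end
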